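/- Let n ≥ 2 be an integer and let r : (−T, T) → ℝ be a maximal n-catenoid profile function. If z₀ > 0 satisfies z₀·r'(z₀) = r(z₀), then r(z₀) ≥ n^(1/(2n−2)). -/

import Mathlib

/-- A maximal `n`-catenoid profile function: a twice differentiable positive function
`r` on the interval `(-T, T)` (where `0 < T ≤ ∞`, encoded via `T : EReal`) with
`r 0 = 1`, `r' 0 = 0`, satisfying the catenoid ODE `r·r'' − (n−1)(1 + r'²) = 0`,
and with `r z → ∞` as `z → ±T`. -/
def IsMaxCatenoidProfile (n : ℕ) (T : EReal) (r : ℝ → ℝ) : Prop :=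
  0 < T ∧
  (∀ z : ℝ, (z : EReal) ∈ Set.Ioo (-T) T → 0 < r z) ∧
  (∀ z : ℝ, (z : EReal) ∈ Set.Ioo (-T) T →
    DifferentiableAt ℝ r z ∧ DifferentiableAt ℝ (deriv r) z) ∧
  r 0 = 1 ∧ deriv r 0 = 0 ∧
  (∀ z : ℝ, (z : EReal) ∈ Set.Ioo (-T) T →
    r z * deriv (deriv r) z - ((n : ℝ) - 1) * (1 + (deriv r z) ^ 2) = 0) ∧
  Filter.Tendsto r
    (Filter.comap (fun z : ℝ => (z : EReal)) (nhdsWithin T (Set.Iio T))) Filter.atTop ∧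
  Filter.Tendsto r
    (Filter.comap (fun z : ℝ => (z : EReal)) (nhdsWithin (-T) (Set.Ioi (-T)))) Filter.atTop

private lemma catenoid_final_alg (n m : ℕ) (hn2 : (2:ℝ) ≤ (n:ℝ)) (R p z₀ : ℝ)
    (hRpos : 0 < R) (hApow : 1 + p ^ 2 = R ^ m)
    (heqq : z₀ * p = R) (hz₀ : 0 < z₀)
    (hwz₀ : ((n:ℝ) - 1) * z₀ ^ 2 ≤ 2 * (R - 1)) : (n : ℝ) ≤ R ^ m := by
  have hppos : 0 < p := by
    rcases lt_trichotomy p 0 with h | h | h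
    · nlinarith
    · rw [h, mul_zero] at heqq; linarith
    · exact h
  have hR1 : 1 < R := by
    by_contra h
    push_neg at h
    have : R ^ m ≤ 1 := pow_le_one₀ hRpos.le h
    nlinarith
  by_contra h
  push_neg at h
  have key : ((n:ℝ) - 1) * z₀ ^ 2 * p ^ 2 ≤ 2 * (R - 1) * p ^ 2 :=
    mul_le_mul_of_nonneg_right hwz₀ (sq_nonneg p)
  have hzp : z₀ ^ 2 * p ^ 2 = R ^ 2 := by rw [← heqq]; ring
  have hpn : p ^ 2 < (n : ℝ) - 1 := by linarith [hApow]
  have h5 : 2 * (R - 1) * p ^ 2 < 2 * (R - 1) * ((n:ℝ) - 1) := by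
    have hRp : (0:ℝ) < 2 * (R - 1) := by linarith
    exact (mul_lt_mul_iff_right₀ hRp).mpr hpn
  have h6 : ((n:ℝ) - 1) * R ^ 2 ≤ 2 * (R - 1) * p ^ 2 := by nlinarith [key, hzp]
  nlinarith [h5, h6, sq_nonneg (R - 1)]

private lemma catenoid_rpow_wrap (n m : ℕ) (hn2 : (2:ℝ) ≤ (n:ℝ))
    (hmc : ((m : ℕ) : ℝ) = 2 * (n : ℝ) - 2) (R : ℝ) (hRpos : 0 < R)
    (hfinal : (n : ℝ) ≤ R ^ m) :
    (n : ℝ) ^ ((1 : ℝ) / (2 * (n : ℝ) - 2)) ≤ R := by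
  have hc : (0:ℝ) < 2 * (n : ℝ) - 2 := by linarith
  have h1 : (n : ℝ) ^ ((1:ℝ) / (2 * (n:ℝ) - 2)) ≤
      (R ^ m : ℝ) ^ ((1:ℝ) / (2 * (n:ℝ) - 2)) :=
    Real.rpow_le_rpow (by positivity) hfinal (by positivity)
  have h2 : (R ^ m : ℝ) ^ ((1:ℝ) / (2 * (n:ℝ) - 2)) = R := by
    rw [← Real.rpow_natCast R m, ← Real.rpow_mul hRpos.le, hmc, mul_one_div,
      div_self hc.ne', Real.rpow_one]
  linarith [h1, h2.le, h2.symm.le]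

/-- If `z₀ > 0` is a point (in the domain of a maximal `n`-catenoid
profile function `r`) where `z₀·r'(z₀) = r(z₀)`, then `r(z₀) ≥ n^(1/(2n−2))`. -/
theorem radial_tangency_height_lower_bound (n : ℕ) (hn : 2 ≤ n)
    (T : EReal) (r : ℝ → ℝ) (hr : IsMaxCatenoidProfile n T r)
    (z₀ : ℝ) (hz₀ : 0 < z₀) (hdom : ((z₀ : ℝ) : EReal) ∈ Set.Ioo (-T) T)
    (heq : z₀ * deriv r z₀ = r z₀) :
    (n : ℝ) ^ ((1 : ℝ) / (2 * (n : ℝ) - 2)) ≤ r z₀ := by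
  obtain ⟨hT, hpos, hdiff, hr0, hr'0, hode, -, -⟩ := hr
  have hn2 : (2 : ℝ) ≤ (n : ℝ) := by exact_mod_cast hn
  -- the whole segment [0, z₀] lies in the domain
  have hmem : ∀ z ∈ Set.Icc (0:ℝ) z₀, ((z : ℝ) : EReal) ∈ Set.Ioo (-T) T := by
    rintro z ⟨h0, h1⟩
    constructor
    · have hneg : (-T : EReal) < 0 := EReal.neg_lt_comm.mpr (by simpa using hT)
      calc (-T : EReal) < ((0:ℝ) : EReal) := by simpa using hneg
        _ ≤ (z : EReal) := by exact_mod_cast h0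
    · exact lt_of_le_of_lt (by exact_mod_cast h1) hdom.2
  set k : ℕ := 2 * n - 3 with hk
  set m : ℕ := 2 * n - 2 with hm
  have hmk : m = k + 1 := by omega
  have hm0 : m ≠ 0 := by omega
  have hmc : ((m : ℕ) : ℝ) = 2 * (n : ℝ) - 2 := by
    have h2 : (m : ℕ) + 2 = 2 * n := by omega
    have h3 := congrArg (fun j : ℕ => (j : ℝ)) h2
    push_cast at h3
    linarith
  have hmk1 : m - 1 = k := by omega
  -- first integral : 1 + r'^2 = r^m on [0, z₀]
  set H : ℝ → ℝ := fun z => (1 + (deriv r z) ^ 2) / (r z) ^ m with hH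
  have hHderiv : ∀ z ∈ Set.Icc (0:ℝ) z₀, HasDerivAt H 0 z := by
    intro z hz
    have hd := hdiff z (hmem z hz)
    have hrz : 0 < r z := hpos z (hmem z hz)
    have hodez := hode z (hmem z hz)
    have hrd : HasDerivAt r (deriv r z) z := hd.1.hasDerivAt
    have hr'd : HasDerivAt (deriv r) (deriv (deriv r) z) z := hd.2.hasDerivAt
    have hf : HasDerivAt (fun z => 1 + (deriv r z) ^ 2)
        (2 * deriv r z * deriv (deriv r) z) z := by
      have := (hr'd.pow 2).const_add 1
      simpa [mul_comm, mul_assoc, mul_left_comm] using this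
    have hg : HasDerivAt (fun z => (r z) ^ m) ((m : ℝ) * (r z) ^ (m - 1) * deriv r z) z :=
      hrd.pow m
    have hgz : (r z) ^ m ≠ 0 := pow_ne_zero _ hrz.ne'
    have h0 := hf.div hg hgz
    have hnum : 2 * deriv r z * deriv (deriv r) z * r z ^ m -
        (1 + deriv r z ^ 2) * ((m : ℝ) * r z ^ (m - 1) * deriv r z) = 0 := by
      rw [hmk1, hmc]
      have hpowm : r z ^ m = r z ^ k * r z := by rw [hmk, pow_succ]
      rw [hpowm]
      linear_combination (2 * deriv r z * r z ^ k) * hodez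
    rw [hnum, zero_div] at h0
    exact h0
  have hIcc : ∀ z ∈ Set.Icc (0:ℝ) z₀, H z = H 0 :=
    constant_of_has_deriv_right_zero
      (fun z hz => (hHderiv z hz).continuousAt.continuousWithinAt)
      (fun z hz => (hHderiv z (Set.Ico_subset_Icc_self hz)).hasDerivWithinAt)
  have hH0 : H 0 = 1 := by simp [hH, hr0, hr'0]
  have hI : ∀ z ∈ Set.Icc (0:ℝ) z₀, 1 + (deriv r z) ^ 2 = (r z) ^ m := by
    intro z hz
    have hgz : (r z) ^ m ≠ 0 := pow_ne_zero _ (hpos z (hmem z hz)).ne'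
    have := (hIcc z hz).trans hH0
    simp only [hH] at this
    field_simp [hH] at this
    linarith [this]
  -- r ≥ 1 on [0, z₀]
  have hge1 : ∀ z ∈ Set.Icc (0:ℝ) z₀, 1 ≤ r z := by
    intro z hz
    have h1 : (1:ℝ) ≤ (r z) ^ m := by
      have := hI z hz; nlinarith [sq_nonneg (deriv r z)]
    exact (one_le_pow_iff_of_nonneg (hpos z (hmem z hz)).le hm0).mp h1
  -- r'' ≥ n - 1 on [0, z₀]
  have hr'' : ∀ z ∈ Set.Icc (0:ℝ) z₀, (n : ℝ) - 1 ≤ deriv (deriv r) z := by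
    intro z hz
    have hrz : 0 < r z := hpos z (hmem z hz)
    have hodez := hode z (hmem z hz)
    have hIz := hI z hz
    have hself : r z ≤ (r z) ^ m := le_self_pow₀ (hge1 z hz) hm0
    have h1 : ((n:ℝ) - 1) * r z ≤ r z * deriv (deriv r) z := by
      rw [sub_eq_zero] at hodez
      rw [hodez, hIz]
      nlinarith
    nlinarith
  -- v := r' - (n-1) z is nonneg on [0, z₀]
  set v : ℝ → ℝ := fun z => deriv r z - ((n:ℝ) - 1) * z with hv
  have hvd : ∀ z ∈ Set.Icc (0:ℝ) z₀,
      HasDerivAt v (deriv (deriv r) z - ((n:ℝ) - 1)) z := by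
    intro z hz
    exact ((hdiff z (hmem z hz)).2.hasDerivAt).sub
      (by simpa using (hasDerivAt_id z).const_mul ((n:ℝ) - 1))
  have hvmono : MonotoneOn v (Set.Icc (0:ℝ) z₀) := by
    apply monotoneOn_of_deriv_nonneg (convex_Icc _ _)
    · exact fun z hz => (hvd z hz).continuousAt.continuousWithinAt
    · intro z hz
      rw [interior_Icc] at hz
      exact ((hvd z (Set.Ioo_subset_Icc_self hz)).differentiableAt).differentiableWithinAt
    · intro z hz
      rw [interior_Icc] at hz
      rw [(hvd z (Set.Ioo_subset_Icc_self hz)).deriv]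
      linarith [hr'' z (Set.Ioo_subset_Icc_self hz)]
  have hvnonneg : ∀ z ∈ Set.Icc (0:ℝ) z₀, 0 ≤ v z := by
    intro z hz
    have h0m : (0:ℝ) ∈ Set.Icc (0:ℝ) z₀ := ⟨le_refl _, hz₀.le⟩
    have := hvmono h0m hz hz.1
    simpa [hv, hr'0] using this
  -- w := 2(r - 1) - (n-1) z² is nonneg at z₀
  set w : ℝ → ℝ := fun z => 2 * (r z - 1) - ((n:ℝ) - 1) * z ^ 2 with hw
  have hwd : ∀ z ∈ Set.Icc (0:ℝ) z₀, HasDerivAt w (2 * v z) z := by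
    intro z hz
    have h1 : HasDerivAt (fun z => 2 * (r z - 1)) (2 * deriv r z) z :=
      (((hdiff z (hmem z hz)).1.hasDerivAt).sub_const 1).const_mul 2
    have h2 : HasDerivAt (fun z : ℝ => ((n:ℝ) - 1) * z ^ 2) (((n:ℝ) - 1) * (2 * z)) z := by
      simpa using ((hasDerivAt_pow 2 z).const_mul ((n:ℝ) - 1))
    have := h1.sub h2
    have e : 2 * v z = 2 * deriv r z - ((n:ℝ) - 1) * (2 * z) := by simp only [hv]; ring
    rw [e]
    exact this
  have hwmono : MonotoneOn w (Set.Icc (0:ℝ) z₀) := by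
    apply monotoneOn_of_deriv_nonneg (convex_Icc _ _)
    · exact fun z hz => (hwd z hz).continuousAt.continuousWithinAt
    · intro z hz
      rw [interior_Icc] at hz
      exact ((hwd z (Set.Ioo_subset_Icc_self hz)).differentiableAt).differentiableWithinAt
    · intro z hz
      rw [interior_Icc] at hz
      rw [(hwd z (Set.Ioo_subset_Icc_self hz)).deriv]
      linarith [hvnonneg z (Set.Ioo_subset_Icc_self hz)]
  have hz₀m : z₀ ∈ Set.Icc (0:ℝ) z₀ := ⟨hz₀.le, le_refl _⟩
  have h0m : (0:ℝ) ∈ Set.Icc (0:ℝ) z₀ := ⟨le_refl _, hz₀.le⟩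
  have hwz₀ : ((n:ℝ) - 1) * z₀ ^ 2 ≤ 2 * (r z₀ - 1) := by
    have := hwmono h0m hz₀m hz₀.le
    simp only [hw, hr0] at this
    nlinarith [this]
  have hRpos : 0 < r z₀ := hpos z₀ hdom
  have hApow : 1 + (deriv r z₀) ^ 2 = (r z₀) ^ m := hI z₀ hz₀m
  have hfinal : (n : ℝ) ≤ (r z₀) ^ m :=
    catenoid_final_alg n m hn2 (r z₀) (deriv r z₀) z₀ hRpos hApow heq hz₀ hwz₀
  exact catenoid_rpow_wrap n m hn2 hmc (r z₀) hRpos hfinal
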